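/- Let A be a 3×3 pairwise comparison matrix and let g be the vector of geometric means of its rows, g_i = (a_{i1}·a_{i2}·a_{i3})^{1/3}. Then g is a positive eigenvector of A, i.e. there exists λ with A·g = λ·g. (Consequently, for three alternatives the Eigenvector Method coincides with the Logarithmic Least Squares / geometric mean method.) -/

import Mathlib

/-- A pairwise comparison matrix: all entries positive and `A j i = 1 / A i j`. -/
def IsPCM {n : ℕ} (A : Matrix (Fin n) (Fin n) ℝ) : Prop :=
  (∀ i j, 0 < A i j) ∧ ∀ i j, A j i = 1 / A i j

private lemma third_eq (x y T G : ℝ) (hx : 0 < x) (hy : 0 ≤ y) (hT : 0 ≤ T)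
    (hG : 0 ≤ G) (h : x ^ 3 * y = T * G) :
    x * y ^ ((1 : ℝ) / 3) = T ^ ((1 : ℝ) / 3) * G ^ ((1 : ℝ) / 3) := by
  rw [← Real.mul_rpow hT hG, ← h, Real.mul_rpow (by positivity) hy,
    ← Real.rpow_natCast x 3, ← Real.rpow_mul hx.le]
  norm_num

/-- For a 3×3 pairwise comparison matrix, the vector of row geometric means is a
positive eigenvector: the Eigenvector Method coincides with the geometric mean
(Logarithmic Least Squares) method for three alternatives. -/
theorem geomMean_is_eigenvector_three (A : Matrix (Fin 3) (Fin 3) ℝ)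
    (hA : IsPCM A) :
    (∀ i, 0 < (fun i => (A i 0 * A i 1 * A i 2) ^ ((1 : ℝ) / 3)) i) ∧
      ∃ lam : ℝ,
        A.mulVec (fun i => (A i 0 * A i 1 * A i 2) ^ ((1 : ℝ) / 3)) =
          lam • (fun i => (A i 0 * A i 1 * A i 2) ^ ((1 : ℝ) / 3)) := by
  obtain ⟨hpos, hrec⟩ := hA
  have hdiag : ∀ i, A i i = 1 := by
    intro i
    have hx := hpos i i
    have h := hrec i i
    rw [eq_div_iff hx.ne', ← one_mul (1 : ℝ)] at h
    rcases mul_self_eq_mul_self_iff.mp h with h' | h'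
    · exact h'
    · nlinarith
  refine ⟨fun i => by
    have h1 := hpos i 0; have h2 := hpos i 1; have h3 := hpos i 2
    positivity, ?_⟩
  have hA00 : 0 < A 0 0 := hpos 0 0
  have hA11 : 0 < A 1 1 := hpos 1 1
  have hA22 : 0 < A 2 2 := hpos 2 2
  have hA10 : 0 < A 1 0 := hpos 1 0
  have hA20 : 0 < A 2 0 := hpos 2 0
  have hA21 : 0 < A 2 1 := hpos 2 1
  have hbp : 0 < A 0 1 := hpos 0 1
  have hcp : 0 < A 0 2 := hpos 0 2
  have hdp : 0 < A 1 2 := hpos 1 2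
  have h00 : A 0 0 = 1 := hdiag 0
  have h11 : A 1 1 = 1 := hdiag 1
  have h22 : A 2 2 = 1 := hdiag 2
  have h10 : A 1 0 = 1 / A 0 1 := hrec 0 1
  have h20 : A 2 0 = 1 / A 0 2 := hrec 0 2
  have h21 : A 2 1 = 1 / A 1 2 := hrec 1 2
  set t := A 0 1 * A 1 2 / A 0 2 with ht
  set s := A 0 2 / (A 0 1 * A 1 2) with hs
  have htp : 0 < t := by positivity
  have hsp : 0 < s := by positivity
  refine ⟨1 + t ^ ((1 : ℝ) / 3) + s ^ ((1 : ℝ) / 3), ?_⟩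
  have h0 : A 0 0 * (A 0 0 * A 0 1 * A 0 2) ^ ((1 : ℝ) / 3)
      + A 0 1 * (A 1 0 * A 1 1 * A 1 2) ^ ((1 : ℝ) / 3)
      + A 0 2 * (A 2 0 * A 2 1 * A 2 2) ^ ((1 : ℝ) / 3)
      = (1 + t ^ ((1 : ℝ) / 3) + s ^ ((1 : ℝ) / 3))
        * (A 0 0 * A 0 1 * A 0 2) ^ ((1 : ℝ) / 3) := by
    rw [third_eq (A 0 1) _ t (A 0 0 * A 0 1 * A 0 2) hbp (by positivity)
        htp.le (by positivity)
        (by rw [h10, h11, h00, ht]; field_simp),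
      third_eq (A 0 2) _ s (A 0 0 * A 0 1 * A 0 2) hcp (by positivity)
        hsp.le (by positivity)
        (by rw [h20, h21, h22, h00, hs]; field_simp), h00]
    ring
  have h1 : A 1 0 * (A 0 0 * A 0 1 * A 0 2) ^ ((1 : ℝ) / 3)
      + A 1 1 * (A 1 0 * A 1 1 * A 1 2) ^ ((1 : ℝ) / 3)
      + A 1 2 * (A 2 0 * A 2 1 * A 2 2) ^ ((1 : ℝ) / 3)
      = (1 + t ^ ((1 : ℝ) / 3) + s ^ ((1 : ℝ) / 3))
        * (A 1 0 * A 1 1 * A 1 2) ^ ((1 : ℝ) / 3) := by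
    rw [third_eq (A 1 0) _ s (A 1 0 * A 1 1 * A 1 2) hA10 (by positivity)
        hsp.le (by positivity)
        (by rw [h10, h11, h00, hs]; field_simp),
      third_eq (A 1 2) _ t (A 1 0 * A 1 1 * A 1 2) hdp (by positivity)
        htp.le (by positivity)
        (by rw [h20, h21, h22, h10, h11, ht]; field_simp), h11]
    ring
  have h2 : A 2 0 * (A 0 0 * A 0 1 * A 0 2) ^ ((1 : ℝ) / 3)
      + A 2 1 * (A 1 0 * A 1 1 * A 1 2) ^ ((1 : ℝ) / 3)
      + A 2 2 * (A 2 0 * A 2 1 * A 2 2) ^ ((1 : ℝ) / 3)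
      = (1 + t ^ ((1 : ℝ) / 3) + s ^ ((1 : ℝ) / 3))
        * (A 2 0 * A 2 1 * A 2 2) ^ ((1 : ℝ) / 3) := by
    rw [third_eq (A 2 0) _ t (A 2 0 * A 2 1 * A 2 2) hA20 (by positivity)
        htp.le (by positivity)
        (by rw [h20, h21, h22, h00, ht]; field_simp),
      third_eq (A 2 1) _ s (A 2 0 * A 2 1 * A 2 2) hA21 (by positivity)
        hsp.le (by positivity)
        (by rw [h20, h21, h22, h10, h11, hs]; field_simp), h22]
    ring
  funext i
  simp only [Matrix.mulVec, dotProduct, Fin.sum_univ_three, Pi.smul_apply,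
    smul_eq_mul]
  fin_cases i
  · exact h0
  · exact h1
  · exact h2
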